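/- Let X ⊆ ℝ^n be a product X = ∏ᵢ Xᵢ and for each player i let Pᵢ : X → subsets of Xᵢ ⊆ ℝ^{nᵢ} be lower semicontinuous. Define Tᵢ(x) = conv(𝒩_{conv∘Pᵢ}(x) ∩ Sᵢ[0,1]) and T(x) = ∏ᵢ Tᵢ(x). Then T is an upper semicontinuous set-valued map with values contained in the closed unit ball product. -/

import Mathlib

open scoped RealInnerProductSpace Pointwise Topology
open Set Metric Filter

/-- Convex hull of a compact set in a Euclidean space is compact (Carathéodory). -/
lemma isCompact_convexHull_aux {d : ℕ} {s : Set (EuclideanSpace ℝ (Fin d))}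
    (hs : IsCompact s) : IsCompact (convexHull ℝ s) := by
  classical
  have hcont : Continuous (fun p : (Fin (d+1) → ℝ) × (Fin (d+1) → EuclideanSpace ℝ (Fin d)) =>
      ∑ j, p.1 j • p.2 j) := by
    apply continuous_finset_sum
    intro j _
    exact ((continuous_apply j).comp continuous_fst).smul
      ((continuous_apply j).comp continuous_snd)
  have hK : IsCompact ((stdSimplex ℝ (Fin (d+1))) ×ˢ
      (Set.univ.pi fun _ : Fin (d+1) => s)) :=
    IsCompact.prod (by apply isCompact_stdSimplex) (isCompact_univ_pi fun _ => hs)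
  have himg : convexHull ℝ s =
      (fun p : (Fin (d+1) → ℝ) × (Fin (d+1) → EuclideanSpace ℝ (Fin d)) =>
        ∑ j, p.1 j • p.2 j) ''
      ((stdSimplex ℝ (Fin (d+1))) ×ˢ (Set.univ.pi fun _ : Fin (d+1) => s)) := by
    apply Subset.antisymm
    · intro x hx
      obtain ⟨ι', hfin, z, w, hrange, hai, hpos, hsum, hcomb⟩ :=
        eq_pos_convex_span_of_mem_convexHull hx
      letI : Fintype ι' := hfin
      have hne : Nonempty ι' := by
        by_contra h
        rw [not_nonempty_iff] at h
        simp [Finset.univ_eq_empty] at hsum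
      obtain ⟨i₀⟩ := hne
      have hcard : Fintype.card ι' ≤ d + 1 := by
        have h1 := hai.card_le_finrank_succ
        have h2 : Module.finrank ℝ (vectorSpan ℝ (Set.range z)) ≤ d := by
          have h3 := Submodule.finrank_le (vectorSpan ℝ (Set.range z))
          rwa [finrank_euclideanSpace_fin] at h3
        omega
      obtain ⟨e⟩ : Nonempty (ι' ↪ Fin (d+1)) := by
        apply Function.Embedding.nonempty_of_card_le
        simpa using hcard
      set w' : Fin (d+1) → ℝ := fun j => if h : ∃ i, e i = j then w h.choose else 0 with hw'
      set z' : Fin (d+1) → EuclideanSpace ℝ (Fin d) :=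
        fun j => if h : ∃ i, e i = j then z h.choose else z i₀ with hz'
      have hchoose : ∀ i : ι', (⟨i, rfl⟩ : ∃ i', e i' = e i).choose = i := fun i =>
        e.injective (⟨i, rfl⟩ : ∃ i', e i' = e i).choose_spec
      have hwe : ∀ i : ι', w' (e i) = w i := by
        intro i
        simp only [hw', dif_pos (⟨i, rfl⟩ : ∃ i', e i' = e i)]
        exact congrArg w (hchoose i)
      have hze : ∀ i : ι', z' (e i) = z i := by
        intro i
        simp only [hz', dif_pos (⟨i, rfl⟩ : ∃ i', e i' = e i)]
        exact congrArg z (hchoose i)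
      have key : ∀ {M : Type} [AddCommMonoid M] (F : ℝ → EuclideanSpace ℝ (Fin d) → M),
          (∀ v, F 0 v = 0) → ∑ j, F (w' j) (z' j) = ∑ i, F (w i) (z i) := by
        intro M _ F hF0
        rw [← Finset.sum_subset (Finset.subset_univ (Finset.univ.image e))]
        · rw [Finset.sum_image (fun a _ b _ h => e.injective h)]
          congr 1
          ext i
          rw [hwe, hze]
        · intro j _ hj
          have hnot : ¬∃ i, e i = j := by
            rintro ⟨i, hi⟩
            exact hj (Finset.mem_image.mpr ⟨i, Finset.mem_univ _, hi⟩)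
          simp only [hw', dif_neg hnot]
          exact hF0 _
      refine ⟨(w', z'), ⟨⟨?_, ?_⟩, ?_⟩, ?_⟩
      · intro j
        by_cases h : ∃ i, e i = j
        · simp only [hw', dif_pos h]; exact (hpos _).le
        · simp only [hw', dif_neg h]; exact le_refl 0
      · have := key (fun a _ => (a : ℝ)) (fun _ => rfl)
        simpa [hsum] using this
      · intro j _
        by_cases h : ∃ i, e i = j
        · simp only [hz', dif_pos h]; exact hrange ⟨_, rfl⟩
        · simp only [hz', dif_neg h]; exact hrange ⟨_, rfl⟩
      · show (∑ j, w' j • z' j) = x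
        rw [key (fun a v => a • v) (fun v => zero_smul ℝ v)]
        exact hcomb
    · rintro _ ⟨⟨w, z⟩, ⟨hw, hz⟩, rfl⟩
      exact mem_convexHull_iff_exists_fintype.mpr
        ⟨Fin (d+1), inferInstance, w, z, hw.1, hw.2, fun j => hz j (Set.mem_univ _), rfl⟩
  rw [himg]
  exact hK.image hcont

lemma convexHull_thickening_subset {E : Type*} [NormedAddCommGroup E] [NormedSpace ℝ E]
    (r : ℝ) (s : Set E) :
    convexHull ℝ (Metric.thickening r s) ⊆ Metric.thickening r (convexHull ℝ s) := by
  have h1 : Metric.thickening r s ⊆ convexHull ℝ s + Metric.ball (0 : E) r := by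
    intro a ha
    obtain ⟨b, hb, hab⟩ := Metric.mem_thickening_iff.mp ha
    exact ⟨b, subset_convexHull ℝ s hb, a - b,
      by simpa [Metric.mem_ball, dist_eq_norm] using hab, by module⟩
  have h2 : Convex ℝ (convexHull ℝ s + Metric.ball (0 : E) r) :=
    (convex_convexHull ℝ s).add (convex_ball (0 : E) r)
  refine (convexHull_min h1 h2).trans ?_
  rintro _ ⟨c, hc, e, he, rfl⟩
  refine Metric.mem_thickening_iff.mpr ⟨c, hc, ?_⟩
  rw [Metric.mem_ball, dist_zero_right] at he
  simpa [dist_eq_norm] using he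

lemma Ai_limit {ι : Type*} [Fintype ι] {n : ι → ℕ}
    {Xs : ∀ i, Set (EuclideanSpace ℝ (Fin (n i)))}
    {P : ∀ i, (∀ j, EuclideanSpace ℝ (Fin (n j))) → Set (EuclideanSpace ℝ (Fin (n i)))}
    (i : ι) {x : ∀ j, EuclideanSpace ℝ (Fin (n j))}
    (hlsc : ∀ V : Set (EuclideanSpace ℝ (Fin (n i))), IsOpen V → (P i x ∩ V).Nonempty →
      ∃ U ∈ nhdsWithin x (Set.pi Set.univ Xs), ∀ x' ∈ U, (P i x' ∩ V).Nonempty)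
    {y : ℕ → ∀ j, EuclideanSpace ℝ (Fin (n j))}
    (hy : Filter.Tendsto y Filter.atTop (nhdsWithin x (Set.pi Set.univ Xs)))
    {v : ℕ → EuclideanSpace ℝ (Fin (n i))}
    (hv : ∀ k, v k ∈ {w : EuclideanSpace ℝ (Fin (n i)) |
        ∀ z ∈ convexHull ℝ (P i (y k)), ⟪w, z - y k i⟫ ≤ 0} ∩ Metric.sphere 0 1)
    {w : EuclideanSpace ℝ (Fin (n i))} (hw : Filter.Tendsto v Filter.atTop (𝓝 w)) :
    w ∈ {w : EuclideanSpace ℝ (Fin (n i)) |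
        ∀ z ∈ convexHull ℝ (P i x), ⟪w, z - x i⟫ ≤ 0} ∩ Metric.sphere 0 1 := by
  classical
  constructor
  · intro z hz
    obtain ⟨κ, hκ, c, g, hc0, hc1, hgs, hgz⟩ := mem_convexHull_iff_exists_fintype.mp hz
    letI : Fintype κ := hκ
    refine le_of_forall_pos_le_add fun ε hε => ?_
    set M : ℝ := ‖z - x i‖ + 1 with hMdef
    have hM : 0 < M := by positivity
    have h1 : ∀ᶠ k in atTop, ∀ m : κ, (P i (y k) ∩ Metric.ball (g m) (ε/3)).Nonempty := by
      rw [Filter.eventually_all]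
      intro m
      obtain ⟨U, hU, hU2⟩ := hlsc (Metric.ball (g m) (ε/3)) isOpen_ball
        ⟨g m, hgs m, Metric.mem_ball_self (by positivity)⟩
      exact hy.eventually (Filter.eventually_iff_exists_mem.mpr ⟨U, hU, hU2⟩)
    have h2 : ∀ᶠ k in atTop, dist (v k) w < ε/(3*M) :=
      (Metric.tendsto_nhds.mp hw) _ (by positivity)
    have h3 : ∀ᶠ k in atTop, dist (y k i) (x i) < ε/3 := by
      have hyx : Filter.Tendsto y Filter.atTop (𝓝 x) := hy.mono_right nhdsWithin_le_nhds
      have : Filter.Tendsto (fun k => y k i) Filter.atTop (𝓝 (x i)) :=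
        ((continuous_apply i).tendsto x).comp hyx
      exact (Metric.tendsto_nhds.mp this) _ (by positivity)
    obtain ⟨k, hk1, hk2, hk3⟩ := (h1.and (h2.and h3)).exists
    choose p hp1 hp2 using hk1
    set z' : EuclideanSpace ℝ (Fin (n i)) := ∑ m, c m • p m with hz'def
    have hz' : z' ∈ convexHull ℝ (P i (y k)) :=
      mem_convexHull_iff_exists_fintype.mpr ⟨κ, hκ, c, p, hc0, hc1, hp1, rfl⟩
    have hineq : ⟪v k, z' - y k i⟫ ≤ 0 := (hv k).1 z' hz'
    have hnv : ‖v k‖ = 1 := by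
      have := (hv k).2
      rwa [Metric.mem_sphere, dist_zero_right] at this
    have hdec : ⟪w, z - x i⟫ =
        ⟪w - v k, z - x i⟫ + ⟪v k, z - z'⟫ + ⟪v k, y k i - x i⟫ + ⟪v k, z' - y k i⟫ := by
      simp only [inner_sub_left, inner_sub_right]
      ring
    have b1 : ⟪w - v k, z - x i⟫ ≤ ε/3 := by
      calc ⟪w - v k, z - x i⟫ ≤ ‖w - v k‖ * ‖z - x i‖ := real_inner_le_norm _ _
        _ ≤ (ε/(3*M)) * M := by
            apply mul_le_mul _ (by simp only [hMdef]; linarith) (norm_nonneg _) (by positivity)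
            rw [← dist_eq_norm, dist_comm]
            exact hk2.le
        _ = ε/3 := by field_simp
    have b2 : ⟪v k, z - z'⟫ ≤ ε/3 := by
      have hzz : z - z' = ∑ m, c m • (g m - p m) := by
        rw [← hgz, hz'def, ← Finset.sum_sub_distrib]
        simp [smul_sub]
      have hzz' : ‖z - z'‖ ≤ ε/3 := by
        rw [hzz]
        refine (norm_sum_le _ _).trans ?_
        have hb : ∀ m ∈ Finset.univ, ‖c m • (g m - p m)‖ ≤ c m * (ε/3) := by
          intro m _
          rw [norm_smul, Real.norm_eq_abs, abs_of_nonneg (hc0 m)]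
          refine mul_le_mul_of_nonneg_left ?_ (hc0 m)
          rw [← dist_eq_norm, dist_comm]
          exact (Metric.mem_ball.mp (hp2 m)).le
        refine (Finset.sum_le_sum hb).trans ?_
        rw [← Finset.sum_mul, hc1, one_mul]
      calc ⟪v k, z - z'⟫ ≤ ‖v k‖ * ‖z - z'‖ := real_inner_le_norm _ _
        _ ≤ ε/3 := by rw [hnv, one_mul]; exact hzz'
    have b3 : ⟪v k, y k i - x i⟫ ≤ ε/3 := by
      calc ⟪v k, y k i - x i⟫ ≤ ‖v k‖ * ‖y k i - x i‖ := real_inner_le_norm _ _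
        _ ≤ ε/3 := by rw [hnv, one_mul, ← dist_eq_norm]; exact hk3.le
    rw [hdec]
    linarith
  · have : IsClosed (Metric.sphere (0 : EuclideanSpace ℝ (Fin (n i))) 1) := isClosed_sphere
    exact this.mem_of_tendsto hw (Filter.Eventually.of_forall fun k => (hv k).2)

lemma Ai_usc {ι : Type*} [Fintype ι] {n : ι → ℕ}
    {Xs : ∀ i, Set (EuclideanSpace ℝ (Fin (n i)))}
    {P : ∀ i, (∀ j, EuclideanSpace ℝ (Fin (n j))) → Set (EuclideanSpace ℝ (Fin (n i)))}
    (i : ι) {x : ∀ j, EuclideanSpace ℝ (Fin (n j))}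
    (hlsc : ∀ V : Set (EuclideanSpace ℝ (Fin (n i))), IsOpen V → (P i x ∩ V).Nonempty →
      ∃ U ∈ nhdsWithin x (Set.pi Set.univ Xs), ∀ x' ∈ U, (P i x' ∩ V).Nonempty)
    {ε : ℝ} (hε : 0 < ε) :
    ∀ᶠ x' in nhdsWithin x (Set.pi Set.univ Xs),
      ({w : EuclideanSpace ℝ (Fin (n i)) |
          ∀ z ∈ convexHull ℝ (P i x'), ⟪w, z - x' i⟫ ≤ 0} ∩ Metric.sphere 0 1) ⊆
      Metric.thickening ε
        ({w : EuclideanSpace ℝ (Fin (n i)) |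
          ∀ z ∈ convexHull ℝ (P i x), ⟪w, z - x i⟫ ≤ 0} ∩ Metric.sphere 0 1) := by
  classical
  set A : (∀ j, EuclideanSpace ℝ (Fin (n j))) → Set (EuclideanSpace ℝ (Fin (n i))) :=
    fun x' => {w : EuclideanSpace ℝ (Fin (n i)) |
        ∀ z ∈ convexHull ℝ (P i x'), ⟪w, z - x' i⟫ ≤ 0} ∩ Metric.sphere 0 1 with hA
  by_contra hcon
  rw [Filter.not_eventually] at hcon
  obtain ⟨U, hU⟩ := (nhdsWithin x (Set.pi Set.univ Xs)).exists_antitone_basis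
  have hsel : ∀ k : ℕ, ∃ y ∈ U k, ¬ A y ⊆ Metric.thickening ε (A x) := fun k =>
    Filter.frequently_iff.mp hcon (hU.1.mem_of_mem trivial)
  choose y hyU hbad using hsel
  have hv : ∀ k, ∃ v ∈ A (y k), v ∉ Metric.thickening ε (A x) := fun k =>
    Set.not_subset.mp (hbad k)
  choose v hv1 hv2 using hv
  have hytend : Filter.Tendsto y Filter.atTop (nhdsWithin x (Set.pi Set.univ Xs)) :=
    hU.tendsto hyU
  obtain ⟨w, hwsph, φ, hφ, hconv⟩ :=
    (isCompact_sphere (0 : EuclideanSpace ℝ (Fin (n i))) 1).tendsto_subseq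
      (fun k => (hv1 k).2)
  have hwA : w ∈ A x :=
    Ai_limit i hlsc (hytend.comp hφ.tendsto_atTop) (fun k => hv1 (φ k)) hconv
  have hwthick : w ∈ Metric.thickening ε (A x) := Metric.self_subset_thickening hε _ hwA
  have hwnot : w ∉ Metric.thickening ε (A x) := by
    have hcl : IsClosed (Metric.thickening ε (A x))ᶜ := Metric.isOpen_thickening.isClosed_compl
    exact hcl.mem_of_tendsto hconv (Filter.Eventually.of_forall fun k => hv2 (φ k))
  exact hwnot hwthick

/-- If each preference map `Pᵢ : X ⇉ Xᵢ` is lower semicontinuous, then the map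
`T(x) = ∏ᵢ conv(𝒩_{conv∘Pᵢ}(x) ∩ Sᵢ[0,1])` is upper semicontinuous on `X = ∏ᵢ Xᵢ`
and its values lie in the product of closed unit balls. -/
theorem T_usc (ι : Type*) [Fintype ι] (n : ι → ℕ)
    (Xs : ∀ i, Set (EuclideanSpace ℝ (Fin (n i))))
    (P : ∀ i, (∀ j, EuclideanSpace ℝ (Fin (n j))) → Set (EuclideanSpace ℝ (Fin (n i))))
    (hPsub : ∀ i x, P i x ⊆ Xs i)
    -- lower semicontinuity of each `Pᵢ` on `X = ∏ᵢ Xᵢ`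
    (hlsc : ∀ i, ∀ x ∈ Set.pi Set.univ Xs, ∀ V : Set (EuclideanSpace ℝ (Fin (n i))),
      IsOpen V → (P i x ∩ V).Nonempty →
      ∃ U ∈ nhdsWithin x (Set.pi Set.univ Xs), ∀ x' ∈ U, (P i x' ∩ V).Nonempty)
    (T : ∀ i, (∀ j, EuclideanSpace ℝ (Fin (n j))) → Set (EuclideanSpace ℝ (Fin (n i))))
    (hT : ∀ i x, T i x = convexHull ℝ
      ({w : EuclideanSpace ℝ (Fin (n i)) |
          ∀ z ∈ convexHull ℝ (P i x), ⟪w, z - x i⟫ ≤ 0} ∩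
        Metric.sphere (0 : EuclideanSpace ℝ (Fin (n i))) 1)) :
    -- `T = ∏ᵢ Tᵢ` is upper semicontinuous on `X` ...
    (∀ x ∈ Set.pi Set.univ Xs, ∀ W : Set (∀ j, EuclideanSpace ℝ (Fin (n j))),
      IsOpen W → Set.pi Set.univ (fun i => T i x) ⊆ W →
      ∃ U ∈ nhdsWithin x (Set.pi Set.univ Xs), ∀ x' ∈ U,
        Set.pi Set.univ (fun i => T i x') ⊆ W) ∧
    -- ... with values in the product of closed unit balls
    (∀ x, Set.pi Set.univ (fun i => T i x) ⊆
      Set.pi Set.univ (fun i => Metric.closedBall (0 : EuclideanSpace ℝ (Fin (n i))) 1)) := by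
  classical
  set A : ∀ i, (∀ j, EuclideanSpace ℝ (Fin (n j))) → Set (EuclideanSpace ℝ (Fin (n i))) :=
    fun i x' => {w : EuclideanSpace ℝ (Fin (n i)) |
        ∀ z ∈ convexHull ℝ (P i x'), ⟪w, z - x' i⟫ ≤ 0} ∩ Metric.sphere 0 1 with hAdef
  have hTA : ∀ i x', T i x' = convexHull ℝ (A i x') := hT
  constructor
  · intro x hx W hW hTW
    have hAcomp : ∀ i, IsCompact (A i x) := by
      intro i
      have hNcl : IsClosed {w : EuclideanSpace ℝ (Fin (n i)) |
          ∀ z ∈ convexHull ℝ (P i x), ⟪w, z - x i⟫ ≤ 0} := by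
        have heq : {w : EuclideanSpace ℝ (Fin (n i)) |
            ∀ z ∈ convexHull ℝ (P i x), ⟪w, z - x i⟫ ≤ 0} =
            ⋂ z ∈ convexHull ℝ (P i x), {w : EuclideanSpace ℝ (Fin (n i)) | ⟪w, z - x i⟫ ≤ 0} := by
          ext w; simp
        rw [heq]
        exact isClosed_biInter fun z hz =>
          isClosed_le (continuous_id.inner continuous_const) continuous_const
      exact (isCompact_sphere _ _).inter_left hNcl
    have hCcomp : ∀ i, IsCompact (T i x) := by
      intro i
      rw [hTA]
      exact isCompact_convexHull_aux (hAcomp i)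
    have hK : IsCompact (Set.pi Set.univ fun i => T i x) := isCompact_univ_pi hCcomp
    obtain ⟨δ, hδ, hthick⟩ := hK.exists_thickening_subset_open hW hTW
    have hev : ∀ᶠ x' in nhdsWithin x (Set.pi Set.univ Xs),
        ∀ i, A i x' ⊆ Metric.thickening (δ/2) (A i x) := by
      rw [Filter.eventually_all]
      intro i
      exact Ai_usc i (hlsc i x hx) (half_pos hδ)
    obtain ⟨U, hU, hUprop⟩ := Filter.eventually_iff_exists_mem.mp hev
    refine ⟨U, hU, ?_⟩
    intro x' hx' w hw
    have hwi : ∀ i, w i ∈ Metric.thickening (δ/2) (T i x) := by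
      intro i
      have h1 : w i ∈ convexHull ℝ (A i x') := by
        rw [← hTA]
        exact hw i (Set.mem_univ i)
      have h2 : w i ∈ convexHull ℝ (Metric.thickening (δ/2) (A i x)) :=
        convexHull_mono (hUprop x' hx' i) h1
      have h3 := convexHull_thickening_subset (δ/2) (A i x) h2
      rwa [← hTA] at h3
    choose cc hcc1 hcc2 using fun i => Metric.mem_thickening_iff.mp (hwi i)
    have hcK : cc ∈ Set.pi Set.univ fun i => T i x := fun i _ => hcc1 i
    apply hthick
    refine Metric.mem_thickening_iff.mpr ⟨cc, hcK, ?_⟩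
    rw [dist_pi_lt_iff hδ]
    intro i
    exact (hcc2 i).trans (half_lt_self hδ)
  · intro x w hw i _
    have h1 : w i ∈ convexHull ℝ (A i x) := by
      rw [← hTA]
      exact hw i (Set.mem_univ i)
    have hsub : A i x ⊆ Metric.closedBall (0 : EuclideanSpace ℝ (Fin (n i))) 1 :=
      fun u hu => Metric.sphere_subset_closedBall hu.2
    exact convexHull_min hsub (convex_closedBall _ _) h1
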